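/- arXiv:2006.10410 — 3 statements merged into one kernel-verified Lean document; each statement's English description precedes it below -/
import Mathlib

section
/- For every action a ∈ A, the variance of the baseline-corrected sampled value estimator over the sampled action a' ~ ξ satisfies Var_{a' ~ ξ}[ṽ_{a'}(a)] = (1/ξ(a) − 1) · (v(a) − b(a))². In particular, if the baseline is perfect, i.e. b(a) = v(a) for all a ∈ A, then ṽ_{a'}(a) = v(a) for all a, a' ∈ A and the estimator has zero variance. -/
/-- The baseline-corrected sampled value estimator: given sampled action `a'`,
its estimate of the value of action `a` is `b a + (v a - b a) / ξ a` if `a = a'`,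
and `b a` otherwise. -/
noncomputable def vtilde {A : Type*} [DecidableEq A] (v b ξ : A → ℝ) (a' a : A) : ℝ :=
  if a = a' then b a + (v a - b a) / ξ a else b a

/-- For every action `a`, the variance of the baseline-corrected sampled value estimator
over the sampled action `a' ~ ξ` is `(1/ξ a − 1)·(v a − b a)²`.  In particular, with a
perfect baseline (`b = v`) the estimator equals `v` identically and has zero variance. -/
theorem variance_baseline_corrected_estimator
    {A : Type*} [Fintype A] [Nonempty A] [DecidableEq A]
    (v b ξ : A → ℝ) (hξpos : ∀ a, 0 < ξ a) (hξsum : ∑ a, ξ a = 1) (a : A) :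
    (∑ a', ξ a' * (vtilde v b ξ a' a - v a) ^ 2 = (1 / ξ a - 1) * (v a - b a) ^ 2) ∧
    ((∀ a₀, b a₀ = v a₀) →
      (∀ a₀ a', vtilde v b ξ a' a₀ = v a₀) ∧
      ∑ a', ξ a' * (vtilde v b ξ a' a - v a) ^ 2 = 0) := by
  have hne : ξ a ≠ 0 := (hξpos a).ne'
  have herase : ∑ a' ∈ Finset.univ.erase a, ξ a' = 1 - ξ a := by
    have := Finset.sum_erase_add Finset.univ ξ (Finset.mem_univ a)
    linarith [hξsum ▸ this]
  have hmain : ∑ a', ξ a' * (vtilde v b ξ a' a - v a) ^ 2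
      = (1 / ξ a - 1) * (v a - b a) ^ 2 := by
    rw [← Finset.add_sum_erase Finset.univ _ (Finset.mem_univ a)]
    have h1 : ∀ a' ∈ Finset.univ.erase a,
        ξ a' * (vtilde v b ξ a' a - v a) ^ 2 = ξ a' * (b a - v a) ^ 2 := by
      intro a' ha'
      have : a ≠ a' := fun h => (Finset.mem_erase.mp ha').1 h.symm
      simp [vtilde, this]
    rw [Finset.sum_congr rfl h1, ← Finset.sum_mul, herase]
    simp only [vtilde, if_pos rfl, eq_self_iff_true, ↓reduceIte]
    field_simp
    ring
  refine ⟨hmain, fun hb => ⟨fun a₀ a' => ?_, by rw [hmain, hb]; ring⟩⟩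
  simp [vtilde, hb]
end

section
/- (Regret-matching induction step) Let R : A → ℝ be a regret vector, u : A → ℝ a utility vector, and define the instantaneous regret r(a) = u(a) − ∑_{a'∈A} π_R(a')·u(a'). Then ∑_{a∈A} max(R(a) + r(a), 0)² ≤ ∑_{a∈A} max(R(a),0)² + ∑_{a∈A} r(a)². -/
/-- The regret-matching policy of a regret vector `R`. -/
noncomputable def rmPolicy {A : Type*} [Fintype A] (R : A → ℝ) (a : A) : ℝ :=
  if 0 < ∑ a', max (R a') 0 then max (R a) 0 / ∑ a', max (R a') 0
  else 1 / (Fintype.card A : ℝ)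

lemma max_add_sq_le (x r : ℝ) : max (x + r) 0 ^ 2 ≤ max x 0 ^ 2 + 2 * max x 0 * r + r ^ 2 := by
  have h : max (x + r) 0 ^ 2 ≤ (max x 0 + r) ^ 2 := by
    rcases le_or_gt (x + r) 0 with h0 | h0
    · rw [max_eq_right h0]; simpa using sq_nonneg (max x 0 + r)
    · rw [max_eq_left h0.le]
      have : x + r ≤ max x 0 + r := by
        have := le_max_left x 0; linarith
      have := sq_le_sq' (by linarith) this
      simpa using this
  calc max (x + r) 0 ^ 2 ≤ (max x 0 + r) ^ 2 := h
    _ = max x 0 ^ 2 + 2 * max x 0 * r + r ^ 2 := by ring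

/-- Regret-matching induction step: with instantaneous regret
`r a = u a − ∑_{a'} π_R a' * u a'`, we have
`∑_a max(R a + r a, 0)² ≤ ∑_a max(R a, 0)² + ∑_a (r a)²`. -/
theorem rmPolicy_induction_step {A : Type*} [Fintype A] [Nonempty A] (R u : A → ℝ) :
    ∑ a, max (R a + (u a - ∑ a', rmPolicy R a' * u a')) 0 ^ 2 ≤
      (∑ a, max (R a) 0 ^ 2) + ∑ a, (u a - ∑ a', rmPolicy R a' * u a') ^ 2 := by
  set v : ℝ := ∑ a', rmPolicy R a' * u a' with hv
  set r : A → ℝ := fun a => u a - v with hr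
  have key : ∑ a, max (R a) 0 * r a = 0 := by
    by_cases hS : 0 < ∑ a', max (R a') 0
    · have hvS : v * (∑ a', max (R a') 0) = ∑ a', max (R a') 0 * u a' := by
        rw [hv, Finset.sum_mul]
        refine Finset.sum_congr rfl fun a _ => ?_
        simp only [rmPolicy, if_pos hS]
        field_simp
      have : ∑ a, max (R a) 0 * r a
          = (∑ a', max (R a') 0 * u a') - v * (∑ a', max (R a') 0) := by
        simp only [hr, mul_sub]
        rw [Finset.sum_sub_distrib, ← Finset.sum_mul]
        ring
      rw [this, hvS]; ring
    · have hz : ∀ a, max (R a) 0 = 0 := by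
        intro a
        have hnn : ∀ b ∈ Finset.univ, (0:ℝ) ≤ max (R b) 0 := fun b _ => le_max_right _ _
        have : ∑ a', max (R a') 0 = 0 := le_antisymm (not_lt.mp hS) (Finset.sum_nonneg hnn)
        exact (Finset.sum_eq_zero_iff_of_nonneg hnn).mp this a (Finset.mem_univ a)
      simp [hz]
  calc ∑ a, max (R a + r a) 0 ^ 2
      ≤ ∑ a, (max (R a) 0 ^ 2 + 2 * max (R a) 0 * r a + r a ^ 2) :=
        Finset.sum_le_sum fun a _ => max_add_sq_le _ _
    _ = (∑ a, max (R a) 0 ^ 2) + 2 * (∑ a, max (R a) 0 * r a) + ∑ a, r a ^ 2 := by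
        rw [Finset.sum_add_distrib, Finset.sum_add_distrib, Finset.mul_sum]
        congr 2
        exact Finset.sum_congr rfl fun a _ => by ring
    _ = (∑ a, max (R a) 0 ^ 2) + ∑ a, r a ^ 2 := by rw [key]; ring
end

section
/- (Regret-to-Nash folk theorem for matrix games) Let p^1,…,p^T be mixed strategies on A and q^1,…,q^T mixed strategies on B, and set p̄ = (1/T)∑_t p^t and q̄ = (1/T)∑_t q^t. Suppose the players' average regrets satisfy (1/T)·(max_{a∈A} ∑_t u(a, q^t) − ∑_t u(p^t, q^t)) ≤ ε₁ and (1/T)·(∑_t u(p^t, q^t) − min_{b∈B} ∑_t u(p^t, b)) ≤ ε₂. Then max_{a∈A} u(a, q̄) − min_{b∈B} u(p̄, b) ≤ ε₁ + ε₂; in particular, (p̄, q̄) is an (ε₁+ε₂)-Nash equilibrium of the zero-sum game. -/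
/-- Regret-to-Nash folk theorem for two-player zero-sum matrix games: if the players'
average regrets over `T` iterations are at most `ε₁` and `ε₂` respectively, then the
pair of average strategies `(p̄, q̄)` satisfies
`max_a u(a, q̄) − min_b u(p̄, b) ≤ ε₁ + ε₂`, i.e. it is an `(ε₁+ε₂)`-Nash equilibrium. -/
theorem regret_to_nash_folk_theorem
    {A B : Type*} [Fintype A] [Nonempty A] [Fintype B] [Nonempty B]
    (u : A → B → ℝ) (T : ℕ) (hT : 0 < T)
    (p : Fin T → A → ℝ) (q : Fin T → B → ℝ)
    (hp0 : ∀ t a, 0 ≤ p t a) (hp1 : ∀ t, ∑ a, p t a = 1)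
    (hq0 : ∀ t b, 0 ≤ q t b) (hq1 : ∀ t, ∑ b, q t b = 1)
    (ε₁ ε₂ : ℝ)
    (hreg1 : ∀ a, (T : ℝ)⁻¹ *
      ((∑ t, ∑ b, q t b * u a b) - ∑ t, ∑ a', ∑ b, p t a' * q t b * u a' b) ≤ ε₁)
    (hreg2 : ∀ b, (T : ℝ)⁻¹ *
      ((∑ t, ∑ a', ∑ b', p t a' * q t b' * u a' b') - ∑ t, ∑ a', p t a' * u a' b) ≤ ε₂) :
    ∀ a b, (∑ b', ((T : ℝ)⁻¹ * ∑ t, q t b') * u a b') -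
             (∑ a', ((T : ℝ)⁻¹ * ∑ t, p t a') * u a' b) ≤ ε₁ + ε₂ := by
  intro a b
  have h := add_le_add (hreg1 a) (hreg2 b)
  have e1 : ∑ b', ((T : ℝ)⁻¹ * ∑ t, q t b') * u a b'
      = (T : ℝ)⁻¹ * ∑ t, ∑ b', q t b' * u a b' := by
    simp only [Finset.sum_mul, Finset.mul_sum, mul_assoc]
    rw [Finset.sum_comm]
  have e2 : ∑ a', ((T : ℝ)⁻¹ * ∑ t, p t a') * u a' b
      = (T : ℝ)⁻¹ * ∑ t, ∑ a', p t a' * u a' b := by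
    simp only [Finset.sum_mul, Finset.mul_sum, mul_assoc]
    rw [Finset.sum_comm]
  rw [e1, e2]
  nlinarith [h]
end
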